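/- arXiv:1201.5360 — 3 statements merged into one kernel-verified Lean document; each statement's English description precedes it below -/
import Mathlib

section
/- Let μ be the Gaussian measure on ℝ with mean m and variance σ² > 0, let K ⊆ ℝ be a compact set, and let (A_k)_{k≥1} be a sequence of Borel subsets of ℝ with A_{k+1} ⊆ A_k for all k and ⋂_{k≥1} A_k = ∅. Then lim_{k→∞} sup_{z ∈ K} μ({x : x + z ∈ A_k}) = 0; i.e., the family of translates of a Gaussian measure by elements of a compact set is uniformly countably additive. -/
open MeasureTheory ProbabilityTheory Filter Real
open scoped NNReal ENNReal

lemma gaussianPDFReal_translate_le (m σ R z y : ℝ) (hσ : 0 < σ) (hz : |z| ≤ R) :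
    gaussianPDFReal m (σ ^ 2).toNNReal (y - z)
      ≤ Real.sqrt 2 * Real.exp (R ^ 2 / (2 * σ ^ 2))
        * gaussianPDFReal m (2 * σ ^ 2).toNNReal y := by
  have hσ2 : (0:ℝ) < σ ^ 2 := by positivity
  rw [gaussianPDFReal, gaussianPDFReal]
  rw [Real.coe_toNNReal _ hσ2.le, Real.coe_toNNReal _ (by positivity : (0:ℝ) ≤ 2 * σ ^ 2)]
  have hπ : (0:ℝ) < π := Real.pi_pos
  have h1 : Real.sqrt (2 * π * (2 * σ ^ 2)) = Real.sqrt 2 * Real.sqrt (2 * π * σ ^ 2) := by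
    rw [← Real.sqrt_mul (by norm_num)]
    ring_nf
  have hs : (0:ℝ) < Real.sqrt (2 * π * σ ^ 2) := Real.sqrt_pos.mpr (by positivity)
  have hs2 : (0:ℝ) < Real.sqrt 2 := by positivity
  have hexp : Real.exp (-(y - z - m) ^ 2 / (2 * σ ^ 2))
      ≤ Real.exp (R ^ 2 / (2 * σ ^ 2)) * Real.exp (-(y - m) ^ 2 / (2 * (2 * σ ^ 2))) := by
    rw [← Real.exp_add]
    apply Real.exp_le_exp.mpr
    have hz2 : z ^ 2 ≤ R ^ 2 := sq_le_sq' (neg_le_of_abs_le hz) (le_of_abs_le hz)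
    rw [div_add_div _ _ (by positivity) (by positivity), div_le_div_iff₀ (by positivity) (by positivity)]
    nlinarith [sq_nonneg (y - z - m - z), hz2, sq_nonneg (σ ^ 2), mul_pos hσ2 hσ2,
      mul_le_mul_of_nonneg_left hz2 (by positivity : (0:ℝ) ≤ 8 * σ ^ 2 * σ ^ 2),
      mul_le_mul_of_nonneg_left (sq_nonneg (y - z - m - z)) (by positivity : (0:ℝ) ≤ 4 * σ ^ 2 * σ ^ 2)]
  calc (Real.sqrt (2 * π * σ ^ 2))⁻¹ * Real.exp (-(y - z - m) ^ 2 / (2 * σ ^ 2))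
      ≤ (Real.sqrt (2 * π * σ ^ 2))⁻¹ *
        (Real.exp (R ^ 2 / (2 * σ ^ 2)) * Real.exp (-(y - m) ^ 2 / (2 * (2 * σ ^ 2)))) := by
        exact mul_le_mul_of_nonneg_left hexp (by positivity)
    _ = Real.sqrt 2 * Real.exp (R ^ 2 / (2 * σ ^ 2)) *
        ((Real.sqrt (2 * π * (2 * σ ^ 2)))⁻¹ * Real.exp (-(y - m) ^ 2 / (2 * (2 * σ ^ 2)))) := by
        rw [h1, mul_inv]
        field_simp

/-- Uniform countable additivity of Gaussian translates: for a Gaussian measure `μ` on `ℝ`,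
a compact set `K`, and a decreasing sequence of Borel sets `A_k` with empty intersection,
`sup_{z ∈ K} μ {x : x + z ∈ A_k} → 0`. -/
theorem stmt_7 (m σ : ℝ) (hσ : 0 < σ) (K : Set ℝ) (hK : IsCompact K)
    (A : ℕ → Set ℝ) (hA : ∀ k, MeasurableSet (A k)) (hanti : Antitone A)
    (hempty : ⋂ k, A k = ∅) :
    Tendsto (fun k => ⨆ z ∈ K, gaussianReal m (σ ^ 2).toNNReal {x | x + z ∈ A k})
      atTop (nhds 0) := by
  have hσ2 : (0:ℝ) < σ ^ 2 := by positivity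
  have hv : ((σ ^ 2).toNNReal : ℝ≥0) ≠ 0 := (Real.toNNReal_pos.mpr hσ2).ne'
  have hw : ((2 * σ ^ 2).toNNReal : ℝ≥0) ≠ 0 :=
    (Real.toNNReal_pos.mpr (by positivity)).ne'
  -- bound K
  obtain ⟨R, hKR⟩ : ∃ R, K ⊆ Metric.closedBall 0 R := by
    obtain ⟨R, hR⟩ := hK.isBounded.subset_closedBall 0
    exact ⟨R, hR⟩
  set c : ℝ≥0∞ := ENNReal.ofReal (Real.sqrt 2 * Real.exp (R ^ 2 / (2 * σ ^ 2))) with hc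
  set ν : Measure ℝ := gaussianReal m (2 * σ ^ 2).toNNReal with hν
  have hcne : c ≠ ⊤ := by rw [hc]; exact ENNReal.ofReal_ne_top
  have key : ∀ k, ∀ z ∈ K, gaussianReal m (σ ^ 2).toNNReal {x | x + z ∈ A k} ≤ c * ν (A k) := by
    intro k z hz
    have hzR : |z| ≤ R := by
      have := hKR hz
      simpa [Real.dist_eq] using this
    have hpre : {x : ℝ | x + z ∈ A k} = (fun x => x + z) ⁻¹' A k := rfl
    rw [gaussianReal_apply _ hv, hν, gaussianReal_apply _ hw]
    have hmpre : MeasurableSet ((fun x => x + z) ⁻¹' A k) :=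
      (hA k).preimage (measurable_add_const z)
    -- change of variables
    have hcov : ∫⁻ x in {x | x + z ∈ A k}, gaussianPDF m (σ ^ 2).toNNReal x
        = ∫⁻ y in A k, gaussianPDF m (σ ^ 2).toNNReal (y - z) := by
      rw [hpre, ← lintegral_indicator hmpre, ← lintegral_indicator (hA k)]
      have : ∀ x : ℝ, ((fun x => x + z) ⁻¹' A k).indicator (gaussianPDF m (σ ^ 2).toNNReal) x
          = (A k).indicator (fun y => gaussianPDF m (σ ^ 2).toNNReal (y - z)) (x + z) := by
        intro x
        by_cases hx : x + z ∈ A k <;>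
          simp [Set.indicator, hx, Set.mem_preimage]
      simp_rw [this]
      exact lintegral_add_right_eq_self
        ((A k).indicator fun y => gaussianPDF m (σ ^ 2).toNNReal (y - z)) z
    rw [hcov, ← lintegral_const_mul' c _ hcne]
    refine lintegral_mono fun y => ?_
    rw [gaussianPDF, gaussianPDF, hc, ← ENNReal.ofReal_mul (by positivity)]
    exact ENNReal.ofReal_le_ofReal (gaussianPDFReal_translate_le m σ R z y hσ hzR)
  have hbound : ∀ k, (⨆ z ∈ K, gaussianReal m (σ ^ 2).toNNReal {x | x + z ∈ A k})
      ≤ c * ν (A k) := by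
    intro k
    exact iSup₂_le (key k)
  have hν0 : Tendsto (fun k => ν (A k)) atTop (nhds 0) := by
    have := tendsto_measure_iInter_atTop (μ := ν)
      (fun k => (hA k).nullMeasurableSet) hanti ⟨0, measure_ne_top ν (A 0)⟩
    rw [hempty] at this
    simpa [Function.comp_def] using this
  have hcν : Tendsto (fun k => c * ν (A k)) atTop (nhds 0) := by
    have := ENNReal.Tendsto.const_mul hν0 (Or.inr hcne)
    simpa using this
  exact tendsto_of_tendsto_of_tendsto_of_le_of_le tendsto_const_nhds hcν
    (fun k => zero_le) hbound
end

section
/- Let (Ω, ℱ, P) be a probability space with a filtration (ℱ_z)_{z∈ℕ}, let (V_z)_{z∈ℕ} be a sequence of nonnegative integrable random variables with V_z measurable with respect to ℱ_z, let b ≥ 0, and let (G_z)_{z∈ℕ} be events with G_z ∈ ℱ_z. Suppose that for every z ≥ 0, E[V_{z+1} | ℱ_z] ≤ V_z − 1 + b·1_{G_z} almost surely. Define σ = inf{z ≥ 1 : ω ∈ G_z} (with σ = ∞ if no such z exists). Then E[σ] ≤ E[V_0] + b; in particular σ < ∞ almost surely. -/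
open MeasureTheory Filter
open scoped ENNReal

/-- Foster–Lyapunov drift towards a sequence of events: if
`E[V_{z+1} | ℱ_z] ≤ V_z − 1 + b·1_{G_z}` a.s. for all `z`, then the first entrance time
`σ = inf{z ≥ 1 : ω ∈ G_z}` satisfies `E[σ] ≤ E[V₀] + b`; in particular `σ < ∞` a.s. -/
theorem stmt_8 {Ω : Type*} {mΩ : MeasurableSpace Ω} (P : Measure Ω) [IsProbabilityMeasure P]
    (ℱ : Filtration ℕ mΩ) (V : ℕ → Ω → ℝ) (b : ℝ) (hb : 0 ≤ b)
    (G : ℕ → Set Ω) (hG : ∀ z, MeasurableSet[ℱ z] (G z))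
    (hVnonneg : ∀ z ω, 0 ≤ V z ω)
    (hVint : ∀ z, Integrable (V z) P)
    (hVadapted : ∀ z, StronglyMeasurable[ℱ z] (V z))
    (hdrift : ∀ z, P[V (z + 1) | ℱ z]
        ≤ᵐ[P] fun ω => V z ω - 1 + b * (G z).indicator (fun _ => (1 : ℝ)) ω) :
    (∫⁻ ω, ⨅ (z : ℕ) (_ : 1 ≤ z ∧ ω ∈ G z), (z : ℝ≥0∞) ∂P)
        ≤ ENNReal.ofReal (∫ ω, V 0 ω ∂P) + ENNReal.ofReal b ∧
      ∀ᵐ ω ∂P, (⨅ (z : ℕ) (_ : 1 ≤ z ∧ ω ∈ G z), (z : ℝ≥0∞)) < ⊤ := by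
  classical
  set A : ℕ → Set Ω := fun n => {ω | ∀ j, 1 ≤ j → j ≤ n → ω ∉ G j} with hA
  have hAmeasF : ∀ n, MeasurableSet[ℱ n] (A n) := by
    intro n
    have hAe : A n = ⋂ (j : ℕ) (_ : 1 ≤ j) (_ : j ≤ n), (G j)ᶜ := by
      ext ω; simp [hA]
    rw [hAe]
    exact MeasurableSet.iInter fun j => MeasurableSet.iInter fun _ =>
      MeasurableSet.iInter fun hj => (ℱ.mono hj _ (hG j)).compl
  have hAmeas : ∀ n, MeasurableSet (A n) := fun n => ℱ.le n _ (hAmeasF n)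
  have hAsub : ∀ n, A (n + 1) ⊆ A n := fun n ω h j h1 h2 => h j h1 (h2.trans n.le_succ)
  have hA0 : A 0 = Set.univ := by
    ext ω; simp only [hA, Set.mem_setOf_eq, Set.mem_univ, iff_true]
    intro j h1 h2; omega
  -- one-step drift inequality over A n
  have key : ∀ n, ∫ ω in A (n + 1), V (n + 1) ω ∂P + (P (A n)).toReal
      ≤ ∫ ω in A n, V n ω ∂P + (if n = 0 then b else 0) := by
    intro n
    have hGm : MeasurableSet (G n) := ℱ.le n _ (hG n)
    have hind : Integrable ((G n).indicator (fun _ => (1 : ℝ))) P :=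
      (integrable_const (1 : ℝ)).indicator hGm
    have hRHSint : Integrable
        (fun ω => V n ω - 1 + b * (G n).indicator (fun _ => (1 : ℝ)) ω) P :=
      ((hVint n).sub (integrable_const 1)).add (hind.const_mul b)
    have h1 : ∫ ω in A (n + 1), V (n + 1) ω ∂P ≤ ∫ ω in A n, V (n + 1) ω ∂P :=
      setIntegral_mono_set (hVint (n + 1)).integrableOn
        (Filter.Eventually.of_forall fun ω => hVnonneg (n + 1) ω)
        (HasSubset.Subset.eventuallyLE (hAsub n))
    have h2 : ∫ ω in A n, V (n + 1) ω ∂P = ∫ ω in A n, (P[V (n + 1) | ℱ n]) ω ∂P :=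
      (setIntegral_condExp (ℱ.le n) (hVint (n + 1)) (hAmeasF n)).symm
    have h3 : ∫ ω in A n, (P[V (n + 1) | ℱ n]) ω ∂P
        ≤ ∫ ω in A n, (V n ω - 1 + b * (G n).indicator (fun _ => (1 : ℝ)) ω) ∂P :=
      setIntegral_mono_ae integrable_condExp.integrableOn hRHSint.integrableOn (hdrift n)
    have h4 : ∫ ω in A n, (V n ω - 1 + b * (G n).indicator (fun _ => (1 : ℝ)) ω) ∂P
        = ∫ ω in A n, V n ω ∂P - (P (A n)).toReal + b * (P (A n ∩ G n)).toReal := by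
      have hfa : IntegrableOn (fun ω => V n ω - 1) (A n) P :=
        ((hVint n).sub (integrable_const 1)).integrableOn
      have hga : IntegrableOn (fun ω => b * (G n).indicator (fun _ => (1 : ℝ)) ω) (A n) P :=
        ((hind.const_mul b)).integrableOn
      rw [integral_add hfa hga,
        integral_sub ((hVint n).integrableOn) (integrable_const 1).integrableOn,
        integral_const_mul, setIntegral_indicator hGm]
      simp [Measure.restrict_apply, hAmeas n, measureReal_def]
    have h5 : b * (P (A n ∩ G n)).toReal ≤ if n = 0 then b else 0 := by
      rcases Nat.eq_zero_or_pos n with hn | hn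
      · subst hn
        rw [if_pos rfl]
        have hle : (P (A 0 ∩ G 0)).toReal ≤ 1 := by
          have := prob_le_one (μ := P) (s := A 0 ∩ G 0)
          exact ENNReal.toReal_le_of_le_ofReal one_pos.le (by simpa using this)
        nlinarith
      · have hne : A n ∩ G n = ∅ := by
          ext ω; simp only [Set.mem_inter_iff, Set.mem_empty_iff_false, iff_false]
          rintro ⟨hωA, hωG⟩
          exact hωA n hn le_rfl hωG
        rw [hne, if_neg hn.ne']
        simp
    have := h1.trans (h2.le.trans (h3.trans h4.le))
    have hn0 : 0 ≤ b * (P (A n ∩ G n)).toReal := by positivity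
    linarith
  have hfnonneg : ∀ n, 0 ≤ ∫ ω in A n, V n ω ∂P := fun n =>
    setIntegral_nonneg (hAmeas n) fun ω _ => hVnonneg n ω
  have hsum : ∀ N, ∑ k ∈ Finset.range N, (P (A k)).toReal ≤ ∫ ω, V 0 ω ∂P + b := by
    have H : ∀ N, ∑ k ∈ Finset.range N, (P (A k)).toReal + ∫ ω in A N, V N ω ∂P
        ≤ ∫ ω in A 0, V 0 ω ∂P + b := by
      intro N
      induction N with
      | zero => simp [hb]
      | succ n ih =>
        have hk := key n
        rw [Finset.sum_range_succ]
        by_cases hn : n = 0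
        · subst hn
          rw [if_pos rfl] at hk
          simp only [Finset.range_zero, Finset.sum_empty, zero_add] at ih ⊢
          linarith
        · rw [if_neg hn] at hk
          linarith
    intro N
    have := H N
    rw [hA0, Measure.restrict_univ] at this
    linarith [hfnonneg N]
  have htsum : (∑' k, P (A k)) ≤ ENNReal.ofReal (∫ ω, V 0 ω ∂P) + ENNReal.ofReal b := by
    rw [ENNReal.tsum_eq_iSup_sum]
    refine iSup_le fun s => ?_
    obtain ⟨N, hN⟩ : ∃ N, s ⊆ Finset.range N := ⟨s.sup id + 1,
      fun x hx => Finset.mem_range.mpr (Nat.lt_succ_of_le (Finset.le_sup (f := id) hx))⟩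
    calc ∑ k ∈ s, P (A k) ≤ ∑ k ∈ Finset.range N, P (A k) :=
          Finset.sum_le_sum_of_subset hN
      _ = ENNReal.ofReal (∑ k ∈ Finset.range N, (P (A k)).toReal) := by
          rw [ENNReal.ofReal_sum_of_nonneg (fun k _ => ENNReal.toReal_nonneg)]
          exact Finset.sum_congr rfl fun k _ =>
            (ENNReal.ofReal_toReal (measure_ne_top P _)).symm
      _ ≤ ENNReal.ofReal (∫ ω, V 0 ω ∂P + b) := ENNReal.ofReal_le_ofReal (hsum N)
      _ = _ := ENNReal.ofReal_add (integral_nonneg (hVnonneg 0)) hb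
  -- pointwise bound on σ
  have hpt : ∀ ω, (⨅ (z : ℕ) (_ : 1 ≤ z ∧ ω ∈ G z), (z : ℝ≥0∞))
      ≤ ∑' k, (A k).indicator (fun _ => (1 : ℝ≥0∞)) ω := by
    intro ω
    by_cases h : ∃ z, 1 ≤ z ∧ ω ∈ G z
    · have hm := Nat.find_spec h
      refine le_trans (iInf_le_of_le (Nat.find h) (iInf_le _ hm)) ?_
      have hmem : ∀ k < Nat.find h, ω ∈ A k := by
        intro k hk j h1 h2 hGj
        exact Nat.find_min h (lt_of_le_of_lt h2 hk) ⟨h1, hGj⟩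
      calc ((Nat.find h : ℕ) : ℝ≥0∞)
          = ∑ k ∈ Finset.range (Nat.find h), (A k).indicator (fun _ => (1 : ℝ≥0∞)) ω := by
            rw [Finset.sum_congr rfl fun k hk =>
              Set.indicator_of_mem (hmem k (Finset.mem_range.mp hk)) _]
            simp
        _ ≤ _ := ENNReal.sum_le_tsum _
    · have hmem : ∀ k, ω ∈ A k := fun k j h1 h2 hGj => h ⟨j, h1, hGj⟩
      have : (∑' k, (A k).indicator (fun _ => (1 : ℝ≥0∞)) ω) = ⊤ := by
        have : ∀ k : ℕ, (A k).indicator (fun _ => (1 : ℝ≥0∞)) ω = 1 := fun k =>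
          Set.indicator_of_mem (hmem k) _
        rw [tsum_congr this]
        exact ENNReal.tsum_const_eq_top_of_ne_zero one_ne_zero
      rw [this]; exact le_top
  have hσmeas : Measurable fun ω => ⨅ (z : ℕ) (_ : 1 ≤ z ∧ ω ∈ G z), (z : ℝ≥0∞) := by
    apply Measurable.iInf
    intro z
    by_cases hz : 1 ≤ z
    · have he : (fun ω => ⨅ (_ : 1 ≤ z ∧ ω ∈ G z), (z : ℝ≥0∞))
          = (G z).piecewise (fun _ => (z : ℝ≥0∞)) (fun _ => ⊤) := by
        ext ω
        by_cases hω : ω ∈ G z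
        · rw [iInf_pos ⟨hz, hω⟩, Set.piecewise_eq_of_mem _ _ _ hω]
        · rw [iInf_neg (fun hc => hω hc.2), Set.piecewise_eq_of_notMem _ _ _ hω]
      rw [he]
      exact Measurable.piecewise (ℱ.le z _ (hG z)) measurable_const measurable_const
    · have he : (fun ω => ⨅ (_ : 1 ≤ z ∧ ω ∈ G z), (z : ℝ≥0∞)) = fun _ => ⊤ := by
        ext ω; exact iInf_neg fun hc => hz hc.1
      rw [he]; exact measurable_const
  have hlin : (∫⁻ ω, ⨅ (z : ℕ) (_ : 1 ≤ z ∧ ω ∈ G z), (z : ℝ≥0∞) ∂P)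
      ≤ ENNReal.ofReal (∫ ω, V 0 ω ∂P) + ENNReal.ofReal b := by
    calc (∫⁻ ω, ⨅ (z : ℕ) (_ : 1 ≤ z ∧ ω ∈ G z), (z : ℝ≥0∞) ∂P)
        ≤ ∫⁻ ω, ∑' k, (A k).indicator (fun _ => (1 : ℝ≥0∞)) ω ∂P := lintegral_mono hpt
      _ = ∑' k, ∫⁻ ω, (A k).indicator (fun _ => (1 : ℝ≥0∞)) ω ∂P :=
          lintegral_tsum fun k => (measurable_const.indicator (hAmeas k)).aemeasurable
      _ = ∑' k, P (A k) := by
          refine tsum_congr fun k => ?_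
          rw [lintegral_indicator (hAmeas k)]
          simp
      _ ≤ _ := htsum
  refine ⟨hlin, ?_⟩
  exact ae_lt_top hσmeas (lt_of_le_of_lt hlin
    (ENNReal.add_lt_top.mpr ⟨ENNReal.ofReal_lt_top, ENNReal.ofReal_lt_top⟩)).ne
end

section
/- Let (Ω, ℱ, P) be a probability space with a filtration (ℱ_t)_{t∈ℕ}, and let T_0 = 0 ≤ T_1 ≤ T_2 ≤ … be stopping times for this filtration that are finite almost surely. Let (f_t)_{t∈ℕ} be a sequence of nonnegative random variables with f_t measurable with respect to ℱ_t; let (v_z)_{z∈ℕ} and (δ_z)_{z∈ℕ} be sequences of nonnegative integrable random variables measurable with respect to the stopped σ-algebras ℱ_{T_z}; let b ≥ 0 and let (G_z)_{z∈ℕ} be events with G_z ∈ ℱ_{T_z}. Suppose for every z ≥ 0, almost surely, E[v_{z+1} | ℱ_{T_z}] ≤ v_z − δ_z + b·1_{G_z} and E[Σ_{k=T_z}^{T_{z+1}−1} f_k | ℱ_{T_z}] ≤ δ_z. Then for every Z ≥ 1, E[Σ_{k=0}^{T_Z−1} f_k] ≤ E[v_0] + b·Σ_{z=0}^{Z−1}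 P(G_z) ≤ E[v_0] + b·Z. -/
open MeasureTheory Filter
open scoped ENNReal

/-- Random-time state-dependent drift (Yüksel–Meyn): along a.s.-finite stopping times
`0 = T₀ ≤ T₁ ≤ …`, if `E[v_{z+1} | ℱ_{T_z}] ≤ v_z − δ_z + b·1_{G_z}` and
`E[∑_{k=T_z}^{T_{z+1}−1} f_k | ℱ_{T_z}] ≤ δ_z`, then for every `Z ≥ 1`,
`E[∑_{k<T_Z} f_k] ≤ E[v₀] + b ∑_{z<Z} P(G_z) ≤ E[v₀] + b Z`. -/
theorem stmt_9 {Ω : Type*} {mΩ : MeasurableSpace Ω} (P : Measure Ω) [IsProbabilityMeasure P]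
    (ℱ : Filtration ℕ mΩ) (T : ℕ → Ω → ℕ)
    (hT : ∀ z, IsStoppingTime ℱ (fun ω => (T z ω : WithTop ℕ)))
    (hT0 : ∀ ω, T 0 ω = 0) (hTmono : ∀ z ω, T z ω ≤ T (z + 1) ω)
    (f : ℕ → Ω → ℝ) (hfnonneg : ∀ t ω, 0 ≤ f t ω)
    (hfadapted : ∀ t, StronglyMeasurable[ℱ t] (f t))
    (v δ : ℕ → Ω → ℝ)
    (hvnonneg : ∀ z ω, 0 ≤ v z ω) (hδnonneg : ∀ z ω, 0 ≤ δ z ω)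
    (hvint : ∀ z, Integrable (v z) P) (hδint : ∀ z, Integrable (δ z) P)
    (hvmeas : ∀ z, StronglyMeasurable[(hT z).measurableSpace] (v z))
    (hδmeas : ∀ z, StronglyMeasurable[(hT z).measurableSpace] (δ z))
    (b : ℝ) (hb : 0 ≤ b)
    (G : ℕ → Set Ω) (hG : ∀ z, MeasurableSet[(hT z).measurableSpace] (G z))
    (hdrift : ∀ z, P[v (z + 1) | (hT z).measurableSpace]
        ≤ᵐ[P] fun ω => v z ω - δ z ω + b * (G z).indicator (fun _ => (1 : ℝ)) ω)
    (hsumint : ∀ z, Integrable (fun ω => ∑ k ∈ Finset.Ico (T z ω) (T (z + 1) ω), f k ω) P)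
    (hfdrift : ∀ z,
      P[(fun ω => ∑ k ∈ Finset.Ico (T z ω) (T (z + 1) ω), f k ω) | (hT z).measurableSpace]
        ≤ᵐ[P] δ z) :
    ∀ Z : ℕ, 1 ≤ Z →
      (∫ ω, ∑ k ∈ Finset.range (T Z ω), f k ω ∂P)
          ≤ (∫ ω, v 0 ω ∂P) + b * ∑ z ∈ Finset.range Z, (P (G z)).toReal ∧
        (∫ ω, v 0 ω ∂P) + b * ∑ z ∈ Finset.range Z, (P (G z)).toReal
          ≤ (∫ ω, v 0 ω ∂P) + b * Z := by

  intro Z hZ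
  have hm : ∀ z, (hT z).measurableSpace ≤ mΩ := fun z => (hT z).measurableSpace_le
  have hdecomp : ∀ (n : ℕ) (ω : Ω), ∑ k ∈ Finset.range (T n ω), f k ω
      = ∑ z ∈ Finset.range n, ∑ k ∈ Finset.Ico (T z ω) (T (z + 1) ω), f k ω := by
    intro n ω
    induction n with
    | zero => simp [hT0]
    | succ n ih =>
      rw [Finset.sum_range_succ, ← ih, Finset.range_eq_Ico, Finset.range_eq_Ico]
      exact (Finset.sum_Ico_consecutive _ (Nat.zero_le _) (hTmono n ω)).symm
  have h1 : (∫ ω, ∑ k ∈ Finset.range (T Z ω), f k ω ∂P)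
      = ∑ z ∈ Finset.range Z, ∫ ω, ∑ k ∈ Finset.Ico (T z ω) (T (z + 1) ω), f k ω ∂P := by
    rw [integral_congr_ae (Eventually.of_forall (hdecomp Z)),
      integral_finset_sum _ (fun z _ => hsumint z)]
  have hind : ∀ z, Integrable ((G z).indicator (fun _ => (1 : ℝ))) P :=
    fun z => (integrable_const (1 : ℝ)).indicator (hm z _ (hG z))
  have h2 : ∀ z, (∫ ω, ∑ k ∈ Finset.Ico (T z ω) (T (z + 1) ω), f k ω ∂P)
      ≤ ∫ ω, δ z ω ∂P := by
    intro z
    rw [← integral_condExp (hm z)]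
    exact integral_mono_ae integrable_condExp (hδint z) (hfdrift z)
  have h3 : ∀ z, (∫ ω, δ z ω ∂P)
      ≤ (∫ ω, v z ω ∂P) - (∫ ω, v (z + 1) ω ∂P) + b * (P (G z)).toReal := by
    intro z
    have hRint : Integrable
        (fun ω => v z ω - δ z ω + b * (G z).indicator (fun _ => (1 : ℝ)) ω) P :=
      ((hvint z).sub (hδint z)).add ((hind z).const_mul b)
    have h := integral_mono_ae integrable_condExp hRint (hdrift z)
    rw [integral_condExp (hm z)] at h
    have hint2 : (∫ ω, (G z).indicator (fun _ => (1 : ℝ)) ω ∂P) = (P (G z)).toReal := by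
      rw [integral_indicator_const _ (hm z _ (hG z))]; simp [Measure.real]
    have hsub : Integrable (fun ω => v z ω - δ z ω) P := (hvint z).sub (hδint z)
    have hbind : Integrable (fun ω => b * (G z).indicator (fun _ => (1 : ℝ)) ω) P :=
      (hind z).const_mul b
    rw [integral_add hsub hbind, integral_sub (hvint z) (hδint z),
      integral_const_mul b, hint2] at h
    linarith
  have htele : ∑ z ∈ Finset.range Z,
      ((∫ ω, v z ω ∂P) - (∫ ω, v (z + 1) ω ∂P) + b * (P (G z)).toReal)
      = (∫ ω, v 0 ω ∂P) - (∫ ω, v Z ω ∂P)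
        + b * ∑ z ∈ Finset.range Z, (P (G z)).toReal := by
    rw [Finset.sum_add_distrib, Finset.sum_range_sub' (fun z => ∫ ω, v z ω ∂P),
      Finset.mul_sum]
  constructor
  · calc (∫ ω, ∑ k ∈ Finset.range (T Z ω), f k ω ∂P)
        = ∑ z ∈ Finset.range Z, ∫ ω, ∑ k ∈ Finset.Ico (T z ω) (T (z + 1) ω), f k ω ∂P := h1
      _ ≤ ∑ z ∈ Finset.range Z,
            ((∫ ω, v z ω ∂P) - (∫ ω, v (z + 1) ω ∂P) + b * (P (G z)).toReal) :=
          Finset.sum_le_sum (fun z _ => (h2 z).trans (h3 z))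
      _ = (∫ ω, v 0 ω ∂P) - (∫ ω, v Z ω ∂P)
            + b * ∑ z ∈ Finset.range Z, (P (G z)).toReal := htele
      _ ≤ (∫ ω, v 0 ω ∂P) + b * ∑ z ∈ Finset.range Z, (P (G z)).toReal := by
          have : (0:ℝ) ≤ ∫ ω, v Z ω ∂P := integral_nonneg (fun ω => hvnonneg Z ω)
          linarith
  · have hle : ∑ z ∈ Finset.range Z, (P (G z)).toReal ≤ (Z : ℝ) := by
      calc ∑ z ∈ Finset.range Z, (P (G z)).toReal ≤ ∑ z ∈ Finset.range Z, (1:ℝ) := by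
            refine Finset.sum_le_sum (fun z _ => ?_)
            have := prob_le_one (μ := P) (s := G z)
            simpa using ENNReal.toReal_mono ENNReal.one_ne_top this
        _ = (Z : ℝ) := by simp
    nlinarith [mul_le_mul_of_nonneg_left hle hb]
end
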